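/- Let f be nilpotent on a finite-dimensional vector space V over any field with V = ⟨U_{a_1}⟩ ⊕ ⋯ ⊕ ⟨U_{a_m}⟩ the decomposition by exponents. If X is a characteristic subspace of V, then for each i there is an integer c_i with 0 ≤ c_i ≤ a_i such that X ∩ ⟨U_{a_i}⟩ = f^{c_i}⟨U_{a_i}⟩. -/

import Mathlib

open LinearMap

variable {K : Type*} [Field K] {V : Type*} [AddCommGroup V] [Module K V]

/-- `X` is hyperinvariant for `f`: invariant under every endomorphism commuting with `f`. -/
def Hinv (f : V →ₗ[K] V) (X : Submodule K V) : Prop :=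
  ∀ g : V →ₗ[K] V, g ∘ₗ f = f ∘ₗ g → X.map g ≤ X

/-- `X` is characteristic for `f`: `f`-invariant and fixed by every automorphism commuting with `f`. -/
def Chinv (f : V →ₗ[K] V) (X : Submodule K V) : Prop :=
  X.map f ≤ X ∧
    ∀ α : V ≃ₗ[K] V, (α : V →ₗ[K] V) ∘ₗ f = f ∘ₗ (α : V →ₗ[K] V) →
      X.map (α : V →ₗ[K] V) = X

/-- The cyclic subspace generated by `x`. -/
def cyc (f : V →ₗ[K] V) (x : V) : Submodule K V :=
  Submodule.span K (Set.range fun i : ℕ => (f ^ i) x)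

/-- `x` has exponent `ℓ`. -/
def ExpEq (f : V →ₗ[K] V) (x : V) (ℓ : ℕ) : Prop :=
  (f ^ ℓ) x = 0 ∧ ∀ j < ℓ, (f ^ j) x ≠ 0

/-- `x` has height `q`. -/
def HeightEq (f : V →ₗ[K] V) (x : V) (q : ℕ) : Prop :=
  x ∈ LinearMap.range (f ^ q) ∧ x ∉ LinearMap.range (f ^ (q + 1))

/-- The `r`-th Ulm invariant: number of Jordan blocks of size `r` (for `r ≥ 1`). -/
noncomputable def ulm (f : V →ₗ[K] V) (r : ℕ) : ℕ :=
  Module.finrank K ↥(LinearMap.ker f ⊓ LinearMap.range (f ^ (r - 1))) -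
    Module.finrank K ↥(LinearMap.ker f ⊓ LinearMap.range (f ^ r))

/-- `u` is a generator tuple with exponents `t`. -/
def IsGenTuple {k : ℕ} (f : V →ₗ[K] V) (u : Fin k → V) (t : Fin k → ℕ) : Prop :=
  (∀ i, ExpEq f (u i) (t i)) ∧ DirectSum.IsInternal (fun i => cyc f (u i))

/-- The summand `⟨U_a⟩` of all cyclic subspaces whose generator has exponent `a`. -/
def subU {k : ℕ} (f : V →ₗ[K] V) (u : Fin k → V) (t : Fin k → ℕ) (a : ℕ) : Submodule K V :=
  ⨆ i ∈ {i : Fin k | t i = a}, cyc f (u i)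

open Polynomial

lemma pow_apply_zero_of_ge (f : V →ₗ[K] V) {x : V} {n : ℕ} (hx : (f ^ n) x = 0)
    {m : ℕ} (hm : n ≤ m) : (f ^ m) x = 0 := by
  rw [← Nat.sub_add_cancel hm, pow_add, Module.End.mul_apply, hx, map_zero]

lemma expEq_linearIndependent (f : V →ₗ[K] V) {x : V} {n : ℕ} (h : ExpEq f x n) :
    LinearIndependent K (fun j : Fin n => (f ^ (j : ℕ)) x) := by
  rw [Fintype.linearIndependent_iff]
  intro g hg
  by_contra hne
  push_neg at hne
  have hex : ∃ m : ℕ, ∃ hm : m < n, g ⟨m, hm⟩ ≠ 0 := by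
    obtain ⟨j, hj⟩ := hne; exact ⟨j, j.isLt, by simpa using hj⟩
  classical
  let m0 := Nat.find hex
  obtain ⟨hm0, hg0⟩ := Nat.find_spec hex
  have hmin : ∀ m (hm : m < n), m < m0 → g ⟨m, hm⟩ = 0 := by
    intro m hm hlt
    by_contra hc
    exact absurd (Nat.find_le ⟨hm, hc⟩) (not_le.2 hlt)
  have happ : (f ^ (n - 1 - m0)) (∑ j : Fin n, g j • (f ^ (j : ℕ)) x) = 0 := by
    rw [hg, map_zero]
  rw [map_sum] at happ
  simp only [map_smul, ← Module.End.mul_apply, ← pow_add] at happ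
  rw [Finset.sum_eq_single (⟨m0, hm0⟩ : Fin n)] at happ
  · have hnm : n - 1 - m0 + m0 = n - 1 := Nat.sub_add_cancel (by omega)
    rw [hnm] at happ
    exact h.2 (n - 1) (by omega) (by
      rcases smul_eq_zero.1 happ with h1 | h1
      · exact absurd h1 hg0
      · exact h1)
  · intro j _ hj
    rcases lt_or_ge (j : ℕ) m0 with hlt | hge
    · rw [hmin j j.isLt hlt, zero_smul]
    · have : (j : ℕ) > m0 := by
        rcases Nat.lt_or_ge m0 (j : ℕ) with h' | h'
        · exact h'
        · exact absurd (Fin.ext (le_antisymm h' hge) : j = ⟨m0, hm0⟩) hj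
      have : n ≤ n - 1 - m0 + (j : ℕ) := by omega
      rw [pow_apply_zero_of_ge f h.1 this, smul_zero]
  · intro hmem; exact absurd (Finset.mem_univ _) hmem

lemma cyc_eq_span (f : V →ₗ[K] V) {x : V} {n : ℕ} (h : ExpEq f x n) :
    cyc f x = Submodule.span K (Set.range fun j : Fin n => (f ^ (j : ℕ)) x) := by
  apply le_antisymm
  · rw [cyc, Submodule.span_le]
    rintro _ ⟨m, rfl⟩
    rcases lt_or_ge m n with hm | hm
    · exact Submodule.subset_span ⟨⟨m, hm⟩, rfl⟩
    · show (f ^ m) x ∈ _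
      rw [pow_apply_zero_of_ge f h.1 hm]; exact Submodule.zero_mem _
  · rw [Submodule.span_le]
    rintro _ ⟨j, rfl⟩
    exact Submodule.subset_span ⟨(j : ℕ), rfl⟩

noncomputable def cycBasis (f : V →ₗ[K] V) {x : V} {n : ℕ} (h : ExpEq f x n) :
    Module.Basis (Fin n) K (cyc f x) :=
  Module.Basis.map (Module.Basis.span (expEq_linearIndependent f h))
    (LinearEquiv.ofEq (Submodule.span K (Set.range fun j : Fin n => (f ^ (j : ℕ)) x))
      (cyc f x) (cyc_eq_span f h).symm)

lemma cycBasis_coe (f : V →ₗ[K] V) {x : V} {n : ℕ} (h : ExpEq f x n) (j : Fin n) :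
    (cycBasis f h j : V) = (f ^ (j : ℕ)) x := by
  simp only [cycBasis, Module.Basis.map_apply, LinearEquiv.coe_ofEq_apply]
  exact congrArg Subtype.val (Module.Basis.span_apply (hli := expEq_linearIndependent f h) j)

variable {k : ℕ} (f : V →ₗ[K] V) (u : Fin k → V) (t : Fin k → ℕ) (hu : IsGenTuple f u t)

noncomputable def genBasis : Module.Basis (Σ i : Fin k, Fin (t i)) K V :=
  hu.2.collectedBasis (fun i => cycBasis f (hu.1 i))

lemma genBasis_apply (p : Σ i : Fin k, Fin (t i)) :
    genBasis f u t hu p = (f ^ (p.2 : ℕ)) (u p.1) := by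
  rw [genBasis, hu.2.collectedBasis_coe]
  exact cycBasis_coe f (hu.1 p.1) p.2

noncomputable def gmap (v : Fin k → V) : V →ₗ[K] V :=
  (genBasis f u t hu).constr K fun p => (f ^ (p.2 : ℕ)) (v p.1)

lemma gmap_basis (v : Fin k → V) (p : Σ i : Fin k, Fin (t i)) :
    gmap f u t hu v (genBasis f u t hu p) = (f ^ (p.2 : ℕ)) (v p.1) :=
  Module.Basis.constr_basis _ _ _ _

lemma gmap_comm (v : Fin k → V) (hv : ∀ i, (f ^ t i) (v i) = 0) :
    (gmap f u t hu v) ∘ₗ f = f ∘ₗ (gmap f u t hu v) := by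
  apply (genBasis f u t hu).ext
  rintro ⟨i, j⟩
  rw [LinearMap.comp_apply, LinearMap.comp_apply, gmap_basis, genBasis_apply]
  have hfj : f ((f ^ (j : ℕ)) (u i)) = (f ^ ((j : ℕ) + 1)) (u i) := by
    rw [pow_succ', Module.End.mul_apply]
  have hfj' : f ((f ^ (j : ℕ)) (v i)) = (f ^ ((j : ℕ) + 1)) (v i) := by
    rw [pow_succ', Module.End.mul_apply]
  rw [hfj, hfj']
  rcases lt_or_ge ((j : ℕ) + 1) (t i) with hj | hj
  · have : (f ^ ((j : ℕ) + 1)) (u i) = genBasis f u t hu ⟨i, ⟨(j : ℕ) + 1, hj⟩⟩ := by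
      rw [genBasis_apply]
    rw [this, gmap_basis]
  · rw [pow_apply_zero_of_ge f (hu.1 i).1 hj, map_zero,
      pow_apply_zero_of_ge f (hv i) hj]

lemma gmap_u (v : Fin k → V) (hv : ∀ i, (f ^ t i) (v i) = 0) (i : Fin k) :
    gmap f u t hu v (u i) = v i := by
  rcases Nat.eq_zero_or_pos (t i) with h0 | hpos
  · have hu0 : u i = 0 := by have := (hu.1 i).1; rwa [h0, pow_zero, Module.End.one_apply] at this
    have hv0 : v i = 0 := by have := hv i; rwa [h0, pow_zero, Module.End.one_apply] at this
    rw [hu0, hv0, map_zero]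
  · have : u i = genBasis f u t hu ⟨i, ⟨0, hpos⟩⟩ := by
      rw [genBasis_apply]; simp
    rw [this, gmap_basis]; simp

lemma comm_pow_apply {g : V →ₗ[K] V} (hg : g ∘ₗ f = f ∘ₗ g) (n : ℕ) (x : V) :
    g ((f ^ n) x) = (f ^ n) (g x) := by
  induction n with
  | zero => simp
  | succ n ih =>
    have hg' : ∀ y, g (f y) = f (g y) := fun y => congrFun (congrArg DFunLike.coe hg) y
    rw [pow_succ', Module.End.mul_apply, Module.End.mul_apply, hg', ih]

lemma aeval_mem {N : Submodule K V} (hN : ∀ y ∈ N, f y ∈ N) {x : V} (hx : x ∈ N)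
    (p : K[X]) : (Polynomial.aeval f p) x ∈ N := by
  have hpow : ∀ m : ℕ, (f ^ m) x ∈ N := by
    intro m
    induction m with
    | zero => simpa using hx
    | succ m ih => rw [pow_succ', Module.End.mul_apply]; exact hN _ ih
  rw [Polynomial.aeval_eq_sum_range, LinearMap.sum_apply]
  exact Submodule.sum_mem _ fun i _ => by
    rw [LinearMap.smul_apply]; exact Submodule.smul_mem _ _ (hpow i)

lemma range_stable (v : Fin k → V) (hv : ∀ i, (f ^ t i) (v i) = 0) :
    ∀ y ∈ LinearMap.range (gmap f u t hu v), f y ∈ LinearMap.range (gmap f u t hu v) := by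
  rintro _ ⟨w, rfl⟩
  exact ⟨f w, congrFun (congrArg DFunLike.coe (gmap_comm f u t hu v hv)) w⟩

lemma exists_autom (v : Fin k → V) (hv : ∀ i, (f ^ t i) (v i) = 0)
    [FiniteDimensional K V]
    (hr : ∀ i, u i ∈ LinearMap.range (gmap f u t hu v)) :
    ∃ α : V ≃ₗ[K] V, ((α : V →ₗ[K] V) ∘ₗ f = f ∘ₗ (α : V →ₗ[K] V)) ∧
      ∀ i, α (u i) = v i := by
  have hsurj : Function.Surjective (gmap f u t hu v) := by
    rw [← LinearMap.range_eq_top, eq_top_iff, ← (genBasis f u t hu).span_eq,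
      Submodule.span_le]
    rintro _ ⟨⟨i, j⟩, rfl⟩
    show genBasis f u t hu ⟨i, j⟩ ∈ _
    rw [genBasis_apply]
    have : ∀ m : ℕ, (f ^ m) (u i) ∈ LinearMap.range (gmap f u t hu v) := by
      intro m
      induction m with
      | zero => simpa using hr i
      | succ m ih =>
        rw [pow_succ', Module.End.mul_apply]
        exact range_stable f u t hu v hv _ ih
    exact this _
  have hinj : Function.Injective (gmap f u t hu v) :=
    LinearMap.injective_iff_surjective.2 hsurj
  refine ⟨LinearEquiv.ofBijective _ ⟨hinj, hsurj⟩, ?_, fun i => gmap_u f u t hu v hv i⟩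
  exact gmap_comm f u t hu v hv

lemma cyc_stable (x : V) : ∀ y ∈ cyc f x, f y ∈ cyc f x := by
  intro y hy
  induction hy using Submodule.span_induction with
  | mem y h =>
    obtain ⟨m, rfl⟩ := h
    refine Submodule.subset_span ⟨m + 1, ?_⟩
    show (f ^ (m + 1)) x = f ((f ^ m) x)
    rw [pow_succ', Module.End.mul_apply]
  | zero => simpa using Submodule.zero_mem _
  | add a b _ _ ha hb => rw [map_add]; exact Submodule.add_mem _ ha hb
  | smul c a _ ha => rw [map_smul]; exact Submodule.smul_mem _ _ ha

lemma cyc_le {x : V} {N : Submodule K V} (hN : ∀ y ∈ N, f y ∈ N) (hx : x ∈ N) :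
    cyc f x ≤ N := by
  rw [cyc, Submodule.span_le]
  rintro _ ⟨m, rfl⟩
  show (f ^ m) x ∈ N
  induction m with
  | zero => simpa using hx
  | succ m ih => rw [pow_succ', Module.End.mul_apply]; exact hN _ ih

lemma map_pow_cyc (x : V) (q : ℕ) :
    Submodule.map (f ^ q) (cyc f x) = cyc f ((f ^ q) x) := by
  apply le_antisymm
  · rintro _ ⟨y, hy, rfl⟩
    induction hy using Submodule.span_induction with
    | mem y h =>
      obtain ⟨m, rfl⟩ := h
      refine Submodule.subset_span ⟨m, ?_⟩
      show (f ^ m) ((f ^ q) x) = (f ^ q) ((f ^ m) x)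
      rw [← Module.End.mul_apply, ← Module.End.mul_apply, pow_mul_comm]
    | zero => simpa using Submodule.zero_mem _
    | add a b _ _ ha hb => rw [map_add]; exact Submodule.add_mem _ ha hb
    | smul c a _ ha => rw [map_smul]; exact Submodule.smul_mem _ _ ha
  · rw [cyc, Submodule.span_le]
    rintro _ ⟨m, rfl⟩
    show (f ^ m) ((f ^ q) x) ∈ _
    refine ⟨(f ^ m) x, Submodule.subset_span ⟨m, rfl⟩, ?_⟩
    rw [← Module.End.mul_apply, ← Module.End.mul_apply, pow_mul_comm]

lemma cyc_zero : cyc f (0 : V) = ⊥ := by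
  rw [cyc, eq_bot_iff, Submodule.span_le]
  rintro _ ⟨m, rfl⟩
  simp

theorem stmt5 [FiniteDimensional K V] (f : V →ₗ[K] V) (hf : IsNilpotent f)
    {k : ℕ} (u : Fin k → V) (t : Fin k → ℕ) (ht : Monotone t) (hu : IsGenTuple f u t)
    (X : Submodule K V) (hX : Chinv f X) :
    ∀ a ∈ Set.range t, ∃ c ≤ a, X ⊓ subU f u t a = (subU f u t a).map (f ^ c) := by
  classical
  intro a _
  set W := subU f u t a with hWdef
  set B := genBasis f u t hu with hBdef
  have hexp := hu.1
  have hmap : ∀ q : ℕ, W.map (f ^ q) = ⨆ i ∈ {i : Fin k | t i = a}, cyc f ((f ^ q) (u i)) := by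
    intro q
    rw [hWdef, subU]
    simp only [Submodule.map_iSup, map_pow_cyc]
  have hfa : W.map (f ^ a) = ⊥ := by
    rw [hmap a, eq_bot_iff]
    refine iSup₂_le fun i hi => ?_
    have h0 : (f ^ a) (u i) = 0 := by rw [← hi]; exact (hexp i).1
    rw [h0, cyc_zero]
  have hWle : ∀ i, t i = a → cyc f (u i) ≤ W := by
    intro i hi
    rw [hWdef, subU]
    exact le_iSup₂ (f := fun i _ => cyc f (u i)) i hi
  have hWstab : ∀ q : ℕ, W.map (f ^ q) ≤ W := by
    intro q
    rw [hmap q]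
    refine iSup₂_le fun i hi => le_trans (cyc_le f (cyc_stable f _) ?_) (hWle i hi)
    exact Submodule.subset_span ⟨q, rfl⟩
  have hWspan : W = Submodule.span K (⇑B '' {p : Σ i : Fin k, Fin (t i) | t p.1 = a}) := by
    apply le_antisymm
    · rw [hWdef, subU]
      refine iSup₂_le fun i hi => ?_
      rw [cyc_eq_span f (hexp i), Submodule.span_le]
      rintro _ ⟨j, rfl⟩
      refine Submodule.subset_span ⟨⟨i, j⟩, hi, ?_⟩
      show B ⟨i, j⟩ = (f ^ (j : ℕ)) (u i)
      rw [hBdef, genBasis_apply]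
    · rw [Submodule.span_le]
      rintro _ ⟨⟨i, j⟩, hij, rfl⟩
      have hmem : B ⟨i, j⟩ ∈ cyc f (u i) := by
        rw [hBdef, genBasis_apply]
        exact Submodule.subset_span ⟨(j : ℕ), rfl⟩
      exact hWle i hij hmem
  have claim : ∀ (q : ℕ) (y : V), y ∈ X → y ∈ W.map (f ^ q) → y ∉ W.map (f ^ (q + 1)) →
      W.map (f ^ q) ≤ X := by
    intro q y hyX hyq hyq1
    obtain ⟨z, hzW, hzy⟩ := hyq
    have hzfW : z ∉ W.map f := by
      rintro ⟨z', hz', rfl⟩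
      refine hyq1 ⟨z', hz', ?_⟩
      rw [pow_succ, Module.End.mul_apply]
      exact hzy
    have hzspan : z ∈ Submodule.span K (⇑B '' {p : Σ i : Fin k, Fin (t i) | t p.1 = a}) := by
      rw [← hWspan]; exact hzW
    have hsupp : ((B.repr z).support : Set (Σ i : Fin k, Fin (t i))) ⊆ {p | t p.1 = a} :=
      B.mem_span_image.1 hzspan
    have hp0 : ∃ p ∈ (B.repr z).support, (p.2 : ℕ) = 0 := by
      by_contra hc
      push_neg at hc
      apply hzfW
      rw [← B.sum_repr z]
      refine Submodule.sum_mem _ fun p _ => ?_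
      by_cases hp : p ∈ (B.repr z).support
      · obtain ⟨i, j⟩ := p
        have hij : t i = a := hsupp hp
        have hjpos : (j : ℕ) ≠ 0 := hc _ hp
        obtain ⟨m, hm⟩ : ∃ m, (j : ℕ) = m + 1 := ⟨(j : ℕ) - 1, by omega⟩
        refine Submodule.smul_mem _ _ ⟨(f ^ m) (u i), ?_, ?_⟩
        · exact hWle i hij (Submodule.subset_span ⟨m, rfl⟩)
        · rw [hBdef, genBasis_apply]
          show f ((f ^ m) (u i)) = (f ^ ((⟨i, j⟩ : Σ i : Fin k, Fin (t i)).2 : ℕ)) (u i)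
          rw [hm, pow_succ', Module.End.mul_apply]
      · rw [Finsupp.notMem_support_iff.1 hp, zero_smul]
        exact Submodule.zero_mem _
    obtain ⟨p0, hp0mem, hp0z⟩ := hp0
    obtain ⟨i0, j0⟩ := p0
    have hi0 : t i0 = a := hsupp hp0mem
    have hj00 : (j0 : ℕ) = 0 := hp0z
    set c0 : K := B.repr z ⟨i0, j0⟩ with hc0def
    have hc0 : c0 ≠ 0 := Finsupp.mem_support_iff.1 hp0mem
    set P : Polynomial K :=
      ∑ j : Fin (t i0), Polynomial.C (B.repr z ⟨i0, j⟩) * Polynomial.X ^ (j : ℕ) with hPdef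
    have hPc0 : P.coeff 0 = c0 := by
      rw [hPdef, Polynomial.finset_sum_coeff]
      rw [Finset.sum_eq_single j0]
      · rw [Polynomial.coeff_C_mul, Polynomial.coeff_X_pow, hj00]
        simp [hc0def]
      · intro j _ hj
        rw [Polynomial.coeff_C_mul, Polynomial.coeff_X_pow]
        have hne : ¬ ((0 : ℕ) = (j : ℕ)) := by
          intro h0
          exact hj (Fin.ext (by omega : (j : ℕ) = (j0 : ℕ)))
        rw [if_neg hne, mul_zero]
      · intro h; exact absurd (Finset.mem_univ _) h
    have hPapply : (Polynomial.aeval f P) (u i0) =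
        ∑ j : Fin (t i0), B.repr z ⟨i0, j⟩ • (f ^ (j : ℕ)) (u i0) := by
      rw [hPdef, map_sum, LinearMap.sum_apply]
      refine Finset.sum_congr rfl fun j _ => ?_
      rw [map_mul, Polynomial.aeval_C, Polynomial.aeval_X_pow, Module.End.mul_apply,
        Module.algebraMap_end_apply]
    have hzsum : z = ∑ i : Fin k, ∑ j : Fin (t i), B.repr z ⟨i, j⟩ • (f ^ (j : ℕ)) (u i) := by
      conv_lhs => rw [← B.sum_repr z]
      rw [← Finset.univ_sigma_univ, Finset.sum_sigma]
      refine Finset.sum_congr rfl fun i _ => Finset.sum_congr rfl fun j _ => ?_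
      rw [hBdef, genBasis_apply]
    have hGsum : (∑ j : Fin (t i0), B.repr z ⟨i0, j⟩ • (f ^ (j : ℕ)) (u i0)) +
        (∑ i ∈ Finset.univ.erase i0, ∑ j : Fin (t i), B.repr z ⟨i, j⟩ • (f ^ (j : ℕ)) (u i)) =
        z := by
      have h := Finset.add_sum_erase Finset.univ
        (fun i => ∑ j : Fin (t i), B.repr z ⟨i, j⟩ • (f ^ (j : ℕ)) (u i)) (Finset.mem_univ i0)
      exact h.trans hzsum.symm
    have hA : (Polynomial.aeval f P) (u i0) = z -
        (∑ i ∈ Finset.univ.erase i0, ∑ j : Fin (t i), B.repr z ⟨i, j⟩ • (f ^ (j : ℕ)) (u i)) := by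
      rw [hPapply, eq_sub_iff_add_eq]
      exact hGsum
    set v : Fin k → V := Function.update u i0 z with hvdef
    have hv : ∀ i, (f ^ t i) (v i) = 0 := by
      intro i
      by_cases h : i = i0
      · subst h
        rw [hvdef, Function.update_self, hi0]
        have hz0 : (f ^ a) z ∈ W.map (f ^ a) := ⟨z, hzW, rfl⟩
        rw [hfa] at hz0
        simpa using hz0
      · rw [hvdef, Function.update_of_ne h]
        exact (hexp i).1
    have hrange : ∀ i, u i ∈ LinearMap.range (gmap f u t hu v) := by
      have hstab := range_stable f u t hu v hv
      have hzR : z ∈ LinearMap.range (gmap f u t hu v) :=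
        ⟨u i0, by rw [gmap_u f u t hu v hv, hvdef, Function.update_self]⟩
      have hpowR : ∀ (i' : Fin k) (m : ℕ), i' ≠ i0 →
          (f ^ m) (u i') ∈ LinearMap.range (gmap f u t hu v) := by
        intro i' m hne
        induction m with
        | zero =>
          simpa using ⟨u i', by rw [gmap_u f u t hu v hv, hvdef, Function.update_of_ne hne]⟩
        | succ m ih => rw [pow_succ', Module.End.mul_apply]; exact hstab _ ih
      intro i
      by_cases h : i = i0
      swap
      · exact ⟨u i, by rw [gmap_u f u t hu v hv, hvdef, Function.update_of_ne h]⟩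
      rw [h]
      have hrest : (∑ i ∈ Finset.univ.erase i0,
          ∑ j : Fin (t i), B.repr z ⟨i, j⟩ • (f ^ (j : ℕ)) (u i)) ∈
          LinearMap.range (gmap f u t hu v) := by
        refine Submodule.sum_mem _ fun i' hi' => Submodule.sum_mem _ fun j _ =>
          Submodule.smul_mem _ _ ?_
        exact hpowR i' _ (Finset.ne_of_mem_erase hi')
      have hAR : (Polynomial.aeval f P) (u i0) ∈ LinearMap.range (gmap f u t hu v) := by
        rw [hA]
        exact Submodule.sub_mem _ hzR hrest
      have hcop : IsCoprime (Polynomial.X ^ t i0 : Polynomial K) P := by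
        apply IsCoprime.pow_left
        refine ⟨-(Polynomial.C c0⁻¹ * P.divX), Polynomial.C c0⁻¹, ?_⟩
        have hkey : (Polynomial.C c0⁻¹) * (P - P.divX * Polynomial.X) = 1 := by
          have hd : P - P.divX * Polynomial.X = Polynomial.C (P.coeff 0) := by
            linear_combination (-1 : Polynomial K) * Polynomial.divX_mul_X_add P
          rw [hd, hPc0, ← Polynomial.C_mul, inv_mul_cancel₀ hc0, Polynomial.C_1]
        calc -(Polynomial.C c0⁻¹ * P.divX) * Polynomial.X + Polynomial.C c0⁻¹ * P
            = Polynomial.C c0⁻¹ * (P - P.divX * Polynomial.X) := by ring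
          _ = 1 := hkey
      obtain ⟨aa, bb, hab⟩ := hcop
      have hui0 : u i0 = (Polynomial.aeval f bb) ((Polynomial.aeval f P) (u i0)) := by
        have h1 : (Polynomial.aeval f (aa * Polynomial.X ^ t i0 + bb * P)) (u i0) = u i0 := by
          rw [hab, map_one, Module.End.one_apply]
        rw [map_add, map_mul, map_mul, Polynomial.aeval_X_pow, LinearMap.add_apply,
          Module.End.mul_apply, Module.End.mul_apply, (hexp i0).1, map_zero, zero_add] at h1
        exact h1.symm
      rw [hui0]
      exact aeval_mem f hstab hAR bb
    obtain ⟨α, hαc, hαu⟩ := exists_autom f u t hu v hv hrange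
    have hαz : α ((f ^ q) (u i0)) = y := by
      have hcp := comm_pow_apply f hαc q (u i0)
      rw [LinearEquiv.coe_coe] at hcp
      rw [hcp, hαu i0, hvdef, Function.update_self]
      exact hzy
    have hui0X : (f ^ q) (u i0) ∈ X := by
      have hXeq := hX.2 α hαc
      have hyin : y ∈ X.map (α : V →ₗ[K] V) := by rw [hXeq]; exact hyX
      obtain ⟨x', hx', hx'y⟩ := hyin
      have hxx : x' = (f ^ q) (u i0) := by
        apply α.injective
        rw [hαz]
        exact hx'y
      rwa [← hxx]
    have hall : ∀ i, t i = a → (f ^ q) (u i) ∈ X := by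
      intro i1 hi1
      set w : Fin k → V := u ∘ (Equiv.swap i0 i1) with hwdef
      have hts : ∀ i, t ((Equiv.swap i0 i1) i) = t i := by
        intro i
        rcases eq_or_ne i i0 with h | h
        · subst h; rw [Equiv.swap_apply_left, hi1, hi0]
        rcases eq_or_ne i i1 with h' | h'
        · subst h'; rw [Equiv.swap_apply_right, hi0, hi1]
        · rw [Equiv.swap_apply_of_ne_of_ne h h']
      have hw : ∀ i, (f ^ t i) (w i) = 0 := by
        intro i
        show (f ^ t i) (u ((Equiv.swap i0 i1) i)) = 0
        rw [← hts i]
        exact (hexp _).1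
      have hwr : ∀ i, u i ∈ LinearMap.range (gmap f u t hu w) := by
        intro i
        refine ⟨u ((Equiv.swap i0 i1) i), ?_⟩
        rw [gmap_u f u t hu w hw]
        show u ((Equiv.swap i0 i1) ((Equiv.swap i0 i1) i)) = u i
        rw [Equiv.swap_apply_self]
      obtain ⟨β, hβc, hβu⟩ := exists_autom f u t hu w hw hwr
      have hβz : β ((f ^ q) (u i0)) = (f ^ q) (u i1) := by
        have hcp := comm_pow_apply f hβc q (u i0)
        rw [LinearEquiv.coe_coe] at hcp
        rw [hcp, hβu i0]
        show (f ^ q) (u ((Equiv.swap i0 i1) i0)) = _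
        rw [Equiv.swap_apply_left]
      have hXeq := hX.2 β hβc
      rw [← hXeq]
      exact ⟨(f ^ q) (u i0), hui0X, hβz⟩
    rw [hmap q]
    exact iSup₂_le fun i hi => cyc_le f (fun y' hy' => hX.1 ⟨y', hy', rfl⟩) (hall i hi)
  have hPa : W.map (f ^ a) ≤ X := by rw [hfa]; exact bot_le
  have hex0 : ∃ n, W.map (f ^ n) ≤ X := ⟨a, hPa⟩
  refine ⟨Nat.find hex0, Nat.find_min' hex0 hPa, ?_⟩
  apply le_antisymm
  · rintro y hy
    rw [Submodule.mem_inf] at hy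
    obtain ⟨hyX, hyW⟩ := hy
    by_cases hy0 : y = 0
    · subst hy0; exact Submodule.zero_mem _
    have hex : ∃ n, y ∉ W.map (f ^ n) := by
      refine ⟨a, ?_⟩
      rw [hfa]
      simpa using hy0
    have hq'pos : 0 < Nat.find hex := by
      rcases Nat.eq_zero_or_pos (Nat.find hex) with h0 | h
      · exfalso
        have hspec := Nat.find_spec hex
        rw [h0] at hspec
        exact hspec ⟨y, hyW, by simp⟩
      · exact h
    set q := Nat.find hex - 1 with hqdef
    have hq1 : q + 1 = Nat.find hex := by omega
    have hyq : y ∈ W.map (f ^ q) := by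
      by_contra hc
      have := Nat.find_min' hex hc
      omega
    have hyq1 : y ∉ W.map (f ^ (q + 1)) := by rw [hq1]; exact Nat.find_spec hex
    have hqX := claim q y hyX hyq hyq1
    have hcq : Nat.find hex0 ≤ q := Nat.find_min' hex0 hqX
    obtain ⟨z, hz, hzeq⟩ := hyq
    refine ⟨(f ^ (q - Nat.find hex0)) z, hWstab _ ⟨z, hz, rfl⟩, ?_⟩
    rw [← Module.End.mul_apply, ← pow_add, Nat.add_sub_cancel' hcq]
    exact hzeq
  · exact le_inf (Nat.find_spec hex0) (hWstab _)
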